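/- arXiv:0806.4448 — 2 statements merged into one kernel-verified Lean document; each statement's English description precedes it below -/
import Mathlib

section
/- Let G_k = (S_k, L_k, H_k), k = 1,…,n, be generalized open oscillator triples with m field channels, where each S_k ∈ ℂ^{m×m} is unitary, L_k is a column vector of m elements of 𝒜, and H_k ∈ 𝒜. For j ≤ k set S_{k↞j} = S_k S_{k−1}⋯S_j, S_{k↞k} = S_k, S_{k↞k+1} = I_m. Then the iterated series product satisfies Gₙ ◁ Gₙ₋₁ ◁ ⋯ ◁ G₁ = ( S_{n↞1}, Σ_{k=1}^{n} S_{n↞k+1} L_k, Σ_{k=1}^{n} H_k + Hₙ^f ), where Hₙ^f = (1/(2i)) Σ_{j=1}^{n−1} Σ_{k=j+1}^{n} ( L_k† S_{k↞j+1} L_j − L_j† S_{k↞j+1}† L_k ). -/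
open Finset Matrix

set_option linter.unusedSectionVars false
noncomputable section

variable {A : Type*} [Ring A] [Algebra ℂ A] [StarRing A] [StarModule ℂ A]

/-- Product of a complex matrix with a vector of algebra elements. -/
def mulVecA {ι κ : Type*} [Fintype κ] (M : Matrix ι κ ℂ) (v : κ → A) : ι → A :=
  fun i => ∑ j, M i j • v j

/-- Quadratic-form-style expression `xᵀ M y` with values in the algebra. -/
def quadA {ι κ : Type*} [Fintype ι] [Fintype κ] (x : ι → A) (M : Matrix ι κ ℂ) (y : κ → A) : A :=
  ∑ i, ∑ j, M i j • (x i * y j)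

/-- Sesquilinear expression `L† S L'` with values in the algebra. -/
def sesqA {ι : Type*} [Fintype ι] (L : ι → A) (S : Matrix ι ι ℂ) (L' : ι → A) : A :=
  ∑ i, ∑ j, S i j • (star (L i) * L' j)

/-- Entrywise complex conjugate `M#`. -/
def conjM {ι κ : Type*} (M : Matrix ι κ ℂ) : Matrix ι κ ℂ := M.map (starRingEnd ℂ)

/-- A generalized open oscillator triple `(S, L, H)` with `m` field channels. -/
structure GOO (A : Type*) [Ring A] (m : ℕ) where
  S : Matrix (Fin m) (Fin m) ℂ
  L : Fin m → A
  H : A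

/-- The series product `G₂ ◁ G₁`. -/
def seriesProd {m : ℕ} (G2 G1 : GOO A m) : GOO A m where
  S := G2.S * G1.S
  L := fun i => mulVecA G2.S G1.L i + G2.L i
  H := G1.H + G2.H + (2 * Complex.I)⁻¹ • (sesqA G2.L G2.S G1.L - sesqA G1.L G2.Sᴴ G2.L)

/-- Iterated series product `G k ◁ ⋯ ◁ G 1 ◁ G 0`. -/
def chainG {m : ℕ} (G : ℕ → GOO A m) : ℕ → GOO A m
  | 0 => G 0
  | k + 1 => seriesProd (G (k + 1)) (chainG G k)

/-- `S_{k ↞ j} = S k * S (k-1) * ⋯ * S j` (equal to `1` when `j = k + 1`). -/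
def Sprod {m : ℕ} (S : ℕ → Matrix (Fin m) (Fin m) ℂ) (k j : ℕ) : Matrix (Fin m) (Fin m) ℂ :=
  (((List.range' j (k + 1 - j)).reverse).map S).prod

lemma sum_comm12 {α β γ : Type*} (s : Finset α) (t : Finset β) (u : Finset γ)
    (f : α → β → γ → A) :
    ∑ a ∈ s, ∑ b ∈ t, ∑ c ∈ u, f a b c = ∑ b ∈ t, ∑ a ∈ s, ∑ c ∈ u, f a b c :=
  Finset.sum_comm

lemma sum_comm23 {α β γ : Type*} (s : Finset α) (t : Finset β) (u : Finset γ)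
    (f : α → β → γ → A) :
    ∑ a ∈ s, ∑ b ∈ t, ∑ c ∈ u, f a b c = ∑ a ∈ s, ∑ c ∈ u, ∑ b ∈ t, f a b c :=
  Finset.sum_congr rfl fun _ _ => Finset.sum_comm

lemma mulVecA_one {ι : Type*} [Fintype ι] [DecidableEq ι] (v : ι → A) :
    mulVecA (1 : Matrix ι ι ℂ) v = v := by
  funext i
  simp [mulVecA, Matrix.one_apply, ite_smul]

lemma mulVecA_mul {ι κ τ : Type*} [Fintype κ] [Fintype τ]
    (M : Matrix ι κ ℂ) (N : Matrix κ τ ℂ) (v : τ → A) :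
    mulVecA (M * N) v = mulVecA M (mulVecA N v) := by
  funext i
  simp only [mulVecA, Matrix.mul_apply, Finset.sum_smul, Finset.smul_sum, smul_smul]
  rw [Finset.sum_comm]

lemma mulVecA_sum {ι κ γ : Type*} [Fintype κ] (M : Matrix ι κ ℂ) (s : Finset γ)
    (f : γ → κ → A) (i : ι) :
    mulVecA M (fun j => ∑ k ∈ s, f k j) i = ∑ k ∈ s, mulVecA M (f k) i := by
  simp only [mulVecA, Finset.smul_sum]
  rw [Finset.sum_comm]

lemma sesqA_sum_right {ι γ : Type*} [Fintype ι] (x : ι → A) (S : Matrix ι ι ℂ)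
    (s : Finset γ) (f : γ → ι → A) :
    sesqA x S (fun j => ∑ k ∈ s, f k j) = ∑ k ∈ s, sesqA x S (f k) := by
  simp only [sesqA, Finset.mul_sum, Finset.smul_sum]
  rw [sum_comm23, sum_comm12, sum_comm23]

lemma sesqA_sum_left {ι γ : Type*} [Fintype ι] (y : ι → A) (S : Matrix ι ι ℂ)
    (s : Finset γ) (f : γ → ι → A) :
    sesqA (fun j => ∑ k ∈ s, f k j) S y = ∑ k ∈ s, sesqA (f k) S y := by
  simp only [sesqA, star_sum, Finset.sum_mul, Finset.smul_sum]
  rw [sum_comm23, sum_comm12, sum_comm23]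

lemma sesqA_mulVecA_right {ι κ : Type*} [Fintype ι] [Fintype κ] (x : ι → A)
    (S : Matrix ι ι ℂ) (M : Matrix ι κ ℂ) (v : κ → A) :
    sesqA x S (mulVecA M v) = ∑ i, ∑ j, (S * M) i j • (star (x i) * v j) := by
  simp only [sesqA, mulVecA, Finset.mul_sum, mul_smul_comm, Finset.smul_sum, smul_smul,
    Matrix.mul_apply, Finset.sum_smul]
  rw [sum_comm23]

lemma sesqA_mulVecA_left {ι κ : Type*} [Fintype ι] [Fintype κ] (y : ι → A)
    (S : Matrix ι ι ℂ) (M : Matrix ι κ ℂ) (v : κ → A) :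
    sesqA (mulVecA M v) S y = ∑ a, ∑ j, (Mᴴ * S) a j • (star (v a) * y j) := by
  simp only [sesqA, mulVecA, star_sum, star_smul, Finset.sum_mul, smul_mul_assoc,
    Finset.smul_sum, smul_smul, Matrix.mul_apply, Matrix.conjTranspose_apply, Finset.sum_smul]
  rw [sum_comm23, sum_comm12, sum_comm23]
  refine Finset.sum_congr rfl fun a _ => Finset.sum_congr rfl fun j _ =>
    Finset.sum_congr rfl fun i _ => ?_
  rw [mul_comm]

lemma sesqA_mulVecA_right' {ι : Type*} [Fintype ι] (x : ι → A)
    (S M : Matrix ι ι ℂ) (v : ι → A) :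
    sesqA x S (mulVecA M v) = sesqA x (S * M) v :=
  sesqA_mulVecA_right x S M v

lemma sesqA_mulVecA_left' {ι : Type*} [Fintype ι] (y : ι → A)
    (S M : Matrix ι ι ℂ) (v : ι → A) :
    sesqA (mulVecA M v) S y = sesqA v (Mᴴ * S) y :=
  sesqA_mulVecA_left y S M v

lemma Sprod_self_succ {m : ℕ} (S : ℕ → Matrix (Fin m) (Fin m) ℂ) (k : ℕ) :
    Sprod S k (k + 1) = 1 := by
  simp [Sprod]

lemma Sprod_succ {m : ℕ} (S : ℕ → Matrix (Fin m) (Fin m) ℂ) {k j : ℕ} (h : j ≤ k + 1) :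
    Sprod S (k + 1) j = S (k + 1) * Sprod S k j := by
  unfold Sprod
  have h1 : k + 1 + 1 - j = (k + 1 - j) + 1 := by omega
  have h2 : j + 1 * (k + 1 - j) = k + 1 := by omega
  rw [h1, List.range'_concat, List.reverse_append, h2]
  simp

lemma GOO.ext' {m : ℕ} {x y : GOO A m} (h1 : x.S = y.S) (h2 : x.L = y.L)
    (h3 : x.H = y.H) : x = y := by
  cases x; cases y; cases h1; cases h2; cases h3; rfl

/-- The iterated series product of generalized open oscillators
`G n ◁ G (n-1) ◁ ⋯ ◁ G 0`. -/
theorem stmt1 (m n : ℕ) (G : ℕ → GOO A m)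
    (hS : ∀ k ≤ n, (G k).S ∈ Matrix.unitaryGroup (Fin m) ℂ)
    (hH : ∀ k ≤ n, IsSelfAdjoint (G k).H) :
    chainG G n =
      ⟨Sprod (fun k => (G k).S) n 0,
       fun i => ∑ k ∈ Finset.range (n + 1),
         mulVecA (Sprod (fun l => (G l).S) n (k + 1)) (G k).L i,
       (∑ k ∈ Finset.range (n + 1), (G k).H) +
         (2 * Complex.I)⁻¹ •
           ∑ j ∈ Finset.range n, ∑ k ∈ Finset.Icc (j + 1) n,
             (sesqA (G k).L (Sprod (fun l => (G l).S) k (j + 1)) (G j).L -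
              sesqA (G j).L (Sprod (fun l => (G l).S) k (j + 1))ᴴ (G k).L)⟩ := by
  clear hS hH
  induction n with
  | zero =>
      show G 0 = _
      refine GOO.ext' ?_ ?_ ?_
      · simp [Sprod]
      · funext i
        simp [Sprod_self_succ, mulVecA_one]
      · simp
  | succ n ih =>
      show seriesProd (G (n + 1)) (chainG G n) = _
      rw [ih]
      refine GOO.ext' ?_ ?_ ?_
      · show (G (n + 1)).S * Sprod (fun l => (G l).S) n 0 = Sprod (fun l => (G l).S) (n + 1) 0
        exact (Sprod_succ (fun l => (G l).S) (Nat.zero_le _)).symm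
      · funext i
        show mulVecA (G (n + 1)).S
            (fun j => ∑ k ∈ Finset.range (n + 1), mulVecA (Sprod (fun l => (G l).S) n (k + 1)) (G k).L j) i
            + (G (n + 1)).L i
          = ∑ k ∈ Finset.range (n + 1 + 1),
              mulVecA (Sprod (fun l => (G l).S) (n + 1) (k + 1)) (G k).L i
        rw [mulVecA_sum]
        have hterm : ∀ k ∈ Finset.range (n + 1),
            mulVecA (G (n + 1)).S
              (mulVecA (Sprod (fun l => (G l).S) n (k + 1)) (G k).L) i
            = mulVecA (Sprod (fun l => (G l).S) (n + 1) (k + 1)) (G k).L i := by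
          intro k hk
          rw [Sprod_succ (fun l => (G l).S) (by have := Finset.mem_range.1 hk; omega),
            mulVecA_mul]
        rw [Finset.sum_congr rfl hterm, Finset.sum_range_succ _ (n + 1),
          Sprod_self_succ, mulVecA_one]
      · show (∑ k ∈ Finset.range (n + 1), (G k).H) + _ + (G (n + 1)).H + _ = _
        have hsq : sesqA (G (n + 1)).L (G (n + 1)).S
              (fun j => ∑ k ∈ Finset.range (n + 1), mulVecA (Sprod (fun l => (G l).S) n (k + 1)) (G k).L j)
            = ∑ k ∈ Finset.range (n + 1),
                sesqA (G (n + 1)).L (Sprod (fun l => (G l).S) (n + 1) (k + 1)) (G k).L := by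
          rw [sesqA_sum_right]
          refine Finset.sum_congr rfl fun k hk => ?_
          rw [sesqA_mulVecA_right',
            ← Sprod_succ (fun l => (G l).S) (by have := Finset.mem_range.1 hk; omega)]
        have hsq' : sesqA
              (fun j => ∑ k ∈ Finset.range (n + 1), mulVecA (Sprod (fun l => (G l).S) n (k + 1)) (G k).L j)
              (G (n + 1)).Sᴴ (G (n + 1)).L
            = ∑ k ∈ Finset.range (n + 1),
                sesqA (G k).L (Sprod (fun l => (G l).S) (n + 1) (k + 1))ᴴ (G (n + 1)).L := by
          rw [sesqA_sum_left]
          refine Finset.sum_congr rfl fun k hk => ?_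
          rw [sesqA_mulVecA_left', ← Matrix.conjTranspose_mul,
            ← Sprod_succ (fun l => (G l).S) (by have := Finset.mem_range.1 hk; omega)]
        have hD : ∑ j ∈ Finset.range (n + 1), ∑ k ∈ Finset.Icc (j + 1) (n + 1),
              (sesqA (G k).L (Sprod (fun l => (G l).S) k (j + 1)) (G j).L -
               sesqA (G j).L (Sprod (fun l => (G l).S) k (j + 1))ᴴ (G k).L)
            = (∑ j ∈ Finset.range n, ∑ k ∈ Finset.Icc (j + 1) n,
                (sesqA (G k).L (Sprod (fun l => (G l).S) k (j + 1)) (G j).L -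
                 sesqA (G j).L (Sprod (fun l => (G l).S) k (j + 1))ᴴ (G k).L))
              + ∑ j ∈ Finset.range (n + 1),
                (sesqA (G (n + 1)).L (Sprod (fun l => (G l).S) (n + 1) (j + 1)) (G j).L -
                 sesqA (G j).L (Sprod (fun l => (G l).S) (n + 1) (j + 1))ᴴ (G (n + 1)).L) := by
          have : ∀ j ∈ Finset.range (n + 1),
              ∑ k ∈ Finset.Icc (j + 1) (n + 1),
                (sesqA (G k).L (Sprod (fun l => (G l).S) k (j + 1)) (G j).L -
                 sesqA (G j).L (Sprod (fun l => (G l).S) k (j + 1))ᴴ (G k).L)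
              = (∑ k ∈ Finset.Icc (j + 1) n,
                  (sesqA (G k).L (Sprod (fun l => (G l).S) k (j + 1)) (G j).L -
                   sesqA (G j).L (Sprod (fun l => (G l).S) k (j + 1))ᴴ (G k).L))
                + (sesqA (G (n + 1)).L (Sprod (fun l => (G l).S) (n + 1) (j + 1)) (G j).L -
                   sesqA (G j).L (Sprod (fun l => (G l).S) (n + 1) (j + 1))ᴴ (G (n + 1)).L) := by
            intro j hj
            exact Finset.sum_Icc_succ_top (by have := Finset.mem_range.1 hj; omega) _
          rw [Finset.sum_congr rfl this, Finset.sum_add_distrib]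
          congr 1
          rw [Finset.sum_range_succ]
          simp
        rw [Finset.sum_range_succ _ (n + 1), hsq, hsq', hD, smul_add,
          ← Finset.sum_sub_distrib]
        have habel : ∀ a b d z : A, a + d + b + z = a + b + (d + z) := fun a b d z => by abel
        exact habel _ _ _ _
end
end

section
/- Let G₁ = (S₁, K₁x₁, ½x₁ᵀR₁x₁) and G₂ = (S₂, K₂x₂, ½x₂ᵀR₂x₂) be generalized open oscillator triples with m field channels, built on commuting families of self-adjoint canonical operators x₁, x₂, with R₁ ∈ ℝ^{2n₁×2n₁}, R₂ ∈ ℝ^{2n₂×2n₂} real symmetric and S₁, S₂ ∈ ℂ^{m×m} unitary. Then the series product G₂ ◁ G₁ is again a generalized open oscillator triple: its scattering matrix S₂S₁ is unitary, its coupling vector equals [S₂K₁ K₂] x with x = (x₁ᵀ, x₂ᵀ)ᵀ, and its Hamiltonian equals ½ xᵀ R̃ x where R̃ = [[R₁, Cᵀ],[C, R₂]] is real symmetric with C = (1/(2i))(K₂†S₂K₁ − K₂ᵀS₂#K₁#). -/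
open Finset Matrix

noncomputable section

variable {A : Type*} [Ring A] [Algebra ℂ A] [StarRing A] [StarModule ℂ A]

set_option linter.unusedSectionVars false

lemma sum4_swap {α β γ δ M : Type*} [AddCommMonoid M] [Fintype α] [Fintype β] [Fintype γ] [Fintype δ]
    (f : α → β → γ → δ → M) :
    ∑ a, ∑ b, ∑ j, ∑ k, f a b j k = ∑ j, ∑ k, ∑ b, ∑ a, f a b j k := by
  calc ∑ a, ∑ b, ∑ j, ∑ k, f a b j k
      = ∑ a, ∑ j, ∑ b, ∑ k, f a b j k := Finset.sum_congr rfl fun a _ => Finset.sum_comm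
    _ = ∑ j, ∑ a, ∑ b, ∑ k, f a b j k := Finset.sum_comm
    _ = ∑ j, ∑ a, ∑ k, ∑ b, f a b j k :=
        Finset.sum_congr rfl fun j _ => Finset.sum_congr rfl fun a _ => Finset.sum_comm
    _ = ∑ j, ∑ k, ∑ a, ∑ b, f a b j k := Finset.sum_congr rfl fun j _ => Finset.sum_comm
    _ = ∑ j, ∑ k, ∑ b, ∑ a, f a b j k :=
        Finset.sum_congr rfl fun j _ => Finset.sum_congr rfl fun k _ => Finset.sum_comm

lemma sum4_swap' {α β γ δ M : Type*} [AddCommMonoid M] [Fintype α] [Fintype β] [Fintype γ] [Fintype δ]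
    (f : α → β → γ → δ → M) :
    ∑ a, ∑ b, ∑ k, ∑ j, f a b j k = ∑ j, ∑ k, ∑ b, ∑ a, f a b j k := by
  rw [← sum4_swap]
  exact Finset.sum_congr rfl fun a _ => Finset.sum_congr rfl fun b _ => Finset.sum_comm

lemma mulVecA_mulVecA {ι κ σ : Type*} [Fintype κ] [Fintype σ]
    (M : Matrix ι κ ℂ) (N : Matrix κ σ ℂ) (x : σ → A) (i : ι) :
    mulVecA M (mulVecA N x) i = mulVecA (M * N) x i := by
  simp only [mulVecA, Matrix.mul_apply, Finset.smul_sum, Finset.sum_smul, smul_smul]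
  rw [Finset.sum_comm]

lemma sesqA_mulVecA {ι κ σ : Type*} [Fintype ι] [Fintype κ] [Fintype σ]
    (K : Matrix ι κ ℂ) (S : Matrix ι ι ℂ) (K' : Matrix ι σ ℂ)
    (x : κ → A) (y : σ → A) (hx : ∀ j, IsSelfAdjoint (x j)) :
    sesqA (mulVecA K x) S (mulVecA K' y) = ∑ j, ∑ k, (Kᴴ * S * K') j k • (x j * y k) := by
  have hx' : ∀ j, star (x j) = x j := fun j => (hx j).star_eq
  simp only [sesqA, mulVecA, star_sum, star_smul, hx', Finset.sum_mul, Finset.mul_sum,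
    smul_mul_smul_comm, Finset.smul_sum, smul_smul, Matrix.mul_apply, Finset.sum_smul,
    Matrix.conjTranspose_apply]
  rw [sum4_swap' (f := fun a b j k => (S a b * (star (K a j) * K' b k)) • (x j * y k))]
  refine Finset.sum_congr rfl fun j _ => Finset.sum_congr rfl fun k _ =>
    Finset.sum_congr rfl fun b _ => Finset.sum_congr rfl fun a _ => ?_
  congr 1
  ring

lemma quadA_fromBlocks {ι₁ ι₂ κ₁ κ₂ : Type*} [Fintype ι₁] [Fintype ι₂] [Fintype κ₁] [Fintype κ₂]
    (x1 : ι₁ → A) (x2 : ι₂ → A) (y1 : κ₁ → A) (y2 : κ₂ → A)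
    (P : Matrix ι₁ κ₁ ℂ) (Q : Matrix ι₁ κ₂ ℂ) (R : Matrix ι₂ κ₁ ℂ) (S : Matrix ι₂ κ₂ ℂ) :
    quadA (Sum.elim x1 x2) (Matrix.fromBlocks P Q R S) (Sum.elim y1 y2) =
      quadA x1 P y1 + quadA x1 Q y2 + quadA x2 R y1 + quadA x2 S y2 := by
  simp only [quadA, Fintype.sum_sum_type, Matrix.fromBlocks_apply₁₁, Matrix.fromBlocks_apply₁₂,
    Matrix.fromBlocks_apply₂₁, Matrix.fromBlocks_apply₂₂, Sum.elim_inl, Sum.elim_inr,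
    Finset.sum_add_distrib]
  abel

lemma conjM_mul {ι κ σ : Type*} [Fintype κ] (M : Matrix ι κ ℂ) (N : Matrix κ σ ℂ) :
    conjM (M * N) = conjM M * conjM N := Matrix.map_mul

lemma conjM_conjTranspose {ι κ : Type*} (M : Matrix ι κ ℂ) : conjM Mᴴ = Mᵀ := by
  ext i j; simp [conjM, Matrix.conjTranspose_apply]


/-- The series product `G₂ ◁ G₁` of two generalized open oscillator triples is
again a generalized open oscillator triple: unitary scattering matrix `S₂S₁`, coupling vector
`[S₂K₁ K₂] x`, and Hamiltonian `½ xᵀ R̃ x` with `R̃ = [[R₁, Cᵀ],[C, R₂]]` real symmetric, where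
`C = (1/2i)(K₂†S₂K₁ − K₂ᵀS₂#K₁#)`. -/
theorem stmt5 (m n1 n2 : ℕ)
    (x1 : Fin (2 * n1) → A) (x2 : Fin (2 * n2) → A)
    (hx1 : ∀ i, IsSelfAdjoint (x1 i)) (hx2 : ∀ i, IsSelfAdjoint (x2 i))
    (hcomm : ∀ i j, x1 i * x2 j = x2 j * x1 i)
    (S1 S2 : Matrix (Fin m) (Fin m) ℂ)
    (hS1 : S1 ∈ Matrix.unitaryGroup (Fin m) ℂ) (hS2 : S2 ∈ Matrix.unitaryGroup (Fin m) ℂ)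
    (K1 : Matrix (Fin m) (Fin (2 * n1)) ℂ) (K2 : Matrix (Fin m) (Fin (2 * n2)) ℂ)
    (R1 : Matrix (Fin (2 * n1)) (Fin (2 * n1)) ℝ) (hR1 : R1ᵀ = R1)
    (R2 : Matrix (Fin (2 * n2)) (Fin (2 * n2)) ℝ) (hR2 : R2ᵀ = R2)
    (G1 G2 : GOO A m)
    (hG1 : G1 = ⟨S1, mulVecA K1 x1, (2 : ℂ)⁻¹ • quadA x1 (R1.map Complex.ofReal) x1⟩)
    (hG2 : G2 = ⟨S2, mulVecA K2 x2, (2 : ℂ)⁻¹ • quadA x2 (R2.map Complex.ofReal) x2⟩)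
    (C : Matrix (Fin (2 * n2)) (Fin (2 * n1)) ℂ)
    (hC : C = (2 * Complex.I)⁻¹ • (K2ᴴ * S2 * K1 - K2ᵀ * conjM S2 * conjM K1)) :
    (seriesProd G2 G1).S ∈ Matrix.unitaryGroup (Fin m) ℂ ∧
    (seriesProd G2 G1).S = S2 * S1 ∧
    (seriesProd G2 G1).L = mulVecA (Matrix.fromCols (S2 * K1) K2) (Sum.elim x1 x2) ∧
    (∀ i j, (C i j).im = 0) ∧
    (Matrix.fromBlocks (R1.map Complex.ofReal) Cᵀ C (R2.map Complex.ofReal))ᵀ =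
      Matrix.fromBlocks (R1.map Complex.ofReal) Cᵀ C (R2.map Complex.ofReal) ∧
    (seriesProd G2 G1).H =
      (2 : ℂ)⁻¹ • quadA (Sum.elim x1 x2)
        (Matrix.fromBlocks (R1.map Complex.ofReal) Cᵀ C (R2.map Complex.ofReal))
        (Sum.elim x1 x2) := by
  subst hG1 hG2
  set M : Matrix (Fin (2 * n2)) (Fin (2 * n1)) ℂ := K2ᴴ * S2 * K1 with hM
  have hconj : K2ᵀ * conjM S2 * conjM K1 = conjM M := by
    rw [hM, conjM_mul, conjM_mul, conjM_conjTranspose]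
  have hCentry : ∀ i j, C i j = (2 * Complex.I)⁻¹ * (M i j - star (M i j)) := by
    intro i j
    rw [hC, hconj]
    simp [conjM, Matrix.sub_apply, Matrix.smul_apply, smul_eq_mul]
  have hCreal : ∀ i j, (C i j).im = 0 := by
    intro i j
    rw [hCentry i j]
    have : (2 * Complex.I)⁻¹ * (M i j - star (M i j)) = ((M i j).im : ℂ) := by
      rw [RCLike.star_def, Complex.sub_conj]
      have hI := Complex.I_ne_zero
      field_simp
      simp
    rw [this, Complex.ofReal_im]
  refine ⟨mul_mem hS2 hS1, rfl, ?_, hCreal, ?_, ?_⟩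
  · funext i
    show mulVecA S2 (mulVecA K1 x1) i + mulVecA K2 x2 i = _
    rw [mulVecA_mulVecA]
    simp [mulVecA, Fintype.sum_sum_type, Matrix.fromCols]
  · rw [Matrix.fromBlocks_transpose, Matrix.transpose_transpose]
    have e1 : (R1.map (Complex.ofReal))ᵀ = R1.map Complex.ofReal := by
      rw [← Matrix.transpose_map, hR1]
    have e2 : (R2.map (Complex.ofReal))ᵀ = R2.map Complex.ofReal := by
      rw [← Matrix.transpose_map, hR2]
    rw [e1, e2]
  · show (2 : ℂ)⁻¹ • quadA x1 (R1.map Complex.ofReal) x1 +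
        (2 : ℂ)⁻¹ • quadA x2 (R2.map Complex.ofReal) x2 +
        (2 * Complex.I)⁻¹ • (sesqA (mulVecA K2 x2) S2 (mulVecA K1 x1) -
          sesqA (mulVecA K1 x1) S2ᴴ (mulVecA K2 x2)) = _
    rw [quadA_fromBlocks, sesqA_mulVecA _ _ _ _ _ hx2, sesqA_mulVecA _ _ _ _ _ hx1]
    have hN : K1ᴴ * S2ᴴ * K2 = Mᴴ := by
      rw [hM]; simp [Matrix.conjTranspose_mul, Matrix.mul_assoc]
    have hT2 : ∑ j, ∑ k, (K1ᴴ * S2ᴴ * K2) j k • (x1 j * x2 k) =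
        ∑ j, ∑ k, star (M j k) • (x2 j * x1 k) := by
      rw [Finset.sum_comm]
      refine Finset.sum_congr rfl fun j _ => Finset.sum_congr rfl fun k _ => ?_
      rw [hN, Matrix.conjTranspose_apply, hcomm]
    rw [hT2]
    have hcross : (2 * Complex.I)⁻¹ • ((∑ j, ∑ k, M j k • (x2 j * x1 k)) -
        ∑ j, ∑ k, star (M j k) • (x2 j * x1 k)) = quadA x2 C x1 := by
      simp only [← Finset.sum_sub_distrib, ← sub_smul, Finset.smul_sum, smul_smul, quadA]
      refine Finset.sum_congr rfl fun j _ => Finset.sum_congr rfl fun k _ => ?_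
      rw [hCentry j k]
    rw [hcross]
    have hQT : quadA x1 Cᵀ x2 = quadA x2 C x1 := by
      simp only [quadA, Matrix.transpose_apply]
      rw [Finset.sum_comm]
      exact Finset.sum_congr rfl fun j _ => Finset.sum_congr rfl fun k _ => by rw [hcomm]
    rw [hQT]
    module
end
end
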